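/- Let p : ℝⁿ → ℝ be continuously differentiable and everywhere positive, let F : ℝⁿ → ℝⁿ be a continuously differentiable vector field, and let u : ℝⁿ → ℝ be continuously differentiable, such that the product x ↦ u(x)·F(x) has compact support. Then ∫ ⟨F(x), ∇u(x)⟩ p(x) dx = − ∫ [ (div F)(x) + ⟨∇log p(x), F(x)⟩ ] u(x) p(x) dx, where div F = Σ_{d=1}^{n} ∂F_d/∂x_d and the integrals are with respect to Lebesgue measure on ℝⁿ. -/

import Mathlib

open MeasureTheory
open scoped RealInnerProductSpace

/-- Integral of a directional derivative of a compactly supported `C¹` function vanishes. -/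
lemma integral_fderiv_apply_eq_zero {n : ℕ}
    (g : EuclideanSpace ℝ (Fin n) → ℝ) (hg : ContDiff ℝ 1 g)
    (hgs : HasCompactSupport g) (v : EuclideanSpace ℝ (Fin n)) :
    ∫ x, fderiv ℝ g x v = 0 := by
  have h := integral_mul_fderiv_eq_neg_fderiv_mul_of_integrable
    (μ := (volume : Measure (EuclideanSpace ℝ (Fin n))))
    (f := fun _ => (1:ℝ)) (g := g) (v := v)
    ?_ ?_ ?_ (fun _ _ => differentiableAt_const _) (fun x _ => hg.differentiable one_ne_zero x)
  · simpa [fderiv_fun_const] using h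
  · simp [fderiv_fun_const]
  · simp only [one_mul]
    exact (Continuous.integrable_of_hasCompactSupport
      ((hg.continuous_fderiv one_ne_zero).clm_apply continuous_const) (hgs.fderiv_apply ℝ v))
  · simpa using hg.continuous.integrable_of_hasCompactSupport hgs

lemma inner_gradient_eq_fderiv {n : ℕ} (f : EuclideanSpace ℝ (Fin n) → ℝ)
    (x v : EuclideanSpace ℝ (Fin n)) :
    ⟪gradient f x, v⟫ = fderiv ℝ f x v := InnerProductSpace.toDual_symm_apply

lemma continuous_gradient {n : ℕ} (f : EuclideanSpace ℝ (Fin n) → ℝ) (hf : ContDiff ℝ 1 f) :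
    Continuous (gradient f) := by
  unfold gradient
  exact (InnerProductSpace.toDual ℝ _).symm.continuous.comp (hf.continuous_fderiv one_ne_zero)

lemma fderiv_comp_proj {n : ℕ} (F : EuclideanSpace ℝ (Fin n) → EuclideanSpace ℝ (Fin n))
    (hF : ContDiff ℝ 1 F) (d : Fin n) (x v : EuclideanSpace ℝ (Fin n)) :
    fderiv ℝ (fun y => F y d) x v = fderiv ℝ F x v d := by
  have : HasFDerivAt (fun y => F y d)
      ((EuclideanSpace.proj d).comp (fderiv ℝ F x)) x := by
    exact (EuclideanSpace.proj (𝕜 := ℝ) d).hasFDerivAt.comp x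
      (hF.differentiable one_ne_zero x).hasFDerivAt
  rw [this.fderiv]; rfl

/-- The divergence `div F = Σ_d ∂F_d/∂x_d` of a vector field on `ℝⁿ`. -/
noncomputable def diverg {n : ℕ}
    (F : EuclideanSpace ℝ (Fin n) → EuclideanSpace ℝ (Fin n))
    (x : EuclideanSpace ℝ (Fin n)) : ℝ :=
  ∑ d : Fin n, fderiv ℝ F x (EuclideanSpace.single d 1) d

/-- **Weighted integration by parts against a positive density.** For a continuously
differentiable, everywhere positive `p : ℝⁿ → ℝ`, a continuously differentiable vector
field `F`, and a continuously differentiable `u : ℝⁿ → ℝ` such that `u·F` has compact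
support, `∫ ⟨F, ∇u⟩ p dx = − ∫ (div F + ⟨∇log p, F⟩) u p dx`. -/
theorem weighted_integration_by_parts
    (n : ℕ)
    (p : EuclideanSpace ℝ (Fin n) → ℝ)
    (hp : ContDiff ℝ 1 p) (hppos : ∀ x, 0 < p x)
    (F : EuclideanSpace ℝ (Fin n) → EuclideanSpace ℝ (Fin n))
    (hF : ContDiff ℝ 1 F)
    (u : EuclideanSpace ℝ (Fin n) → ℝ)
    (hu : ContDiff ℝ 1 u)
    (hsupp : HasCompactSupport (fun x => u x • F x)) :
    ∫ x, ⟪F x, gradient u x⟫ * p x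
      = -∫ x, (diverg F x + ⟪gradient (fun y => Real.log (p y)) x, F x⟫) * u x * p x := by
  classical
  have hpd := hp.differentiable one_ne_zero
  have hud := hu.differentiable one_ne_zero
  have hFd := hF.differentiable one_ne_zero
  have hpne : ∀ x, p x ≠ 0 := fun x => ne_of_gt (hppos x)
  have hlog : ContDiff ℝ 1 (fun y => Real.log (p y)) := hp.log hpne
  set A : EuclideanSpace ℝ (Fin n) → ℝ := fun x => ⟪F x, gradient u x⟫ * p x with hA
  set B : EuclideanSpace ℝ (Fin n) → ℝ := fun x =>
    (diverg F x + ⟪gradient (fun y => Real.log (p y)) x, F x⟫) * u x * p x with hB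
  set K := tsupport (fun x => u x • F x) with hK
  have huF0 : ∀ x ∉ K, u x • F x = 0 := fun x hx =>
    image_eq_zero_of_notMem_tsupport (f := fun x => u x • F x) hx
  have hKopen : IsOpen Kᶜ := (isClosed_tsupport _).isOpen_compl
  -- continuity
  have cA : Continuous A := (hF.continuous.inner (continuous_gradient u hu)).mul hp.continuous
  have cdiv : Continuous (diverg F) := by
    unfold diverg
    exact continuous_finset_sum _ fun d _ =>
      (EuclideanSpace.proj (𝕜 := ℝ) d).continuous.comp
        ((hF.continuous_fderiv one_ne_zero).clm_apply continuous_const)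
  have cB : Continuous B :=
    ((cdiv.add ((continuous_gradient _ hlog).inner hF.continuous)).mul hu.continuous).mul
      hp.continuous
  -- vanishing off K
  have hA0 : ∀ x ∉ K, A x = 0 := by
    intro x hx
    by_cases hFx : F x = 0
    · simp [hA, hFx]
    · have hop : IsOpen (Kᶜ ∩ {y | F y ≠ 0}) :=
        hKopen.inter ((isClosed_singleton.preimage hF.continuous).isOpen_compl)
      have hu0 : u =ᶠ[nhds x] (fun _ => (0:ℝ)) :=
        Filter.eventually_of_mem (hop.mem_nhds ⟨hx, hFx⟩)
          (fun y hy => (smul_eq_zero.mp (huF0 y hy.1)).resolve_right hy.2)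
      have hder : fderiv ℝ u x = 0 := by
        rw [hu0.fderiv_eq]; exact fderiv_const_apply 0
      have : gradient u x = 0 := by
        unfold gradient; rw [hder]; simp
      simp [hA, this, hder]
  have hB0 : ∀ x ∉ K, B x = 0 := by
    intro x hx
    by_cases hux : u x = 0
    · simp [hB, hux]
    · have hop : IsOpen (Kᶜ ∩ {y | u y ≠ 0}) :=
        hKopen.inter ((isClosed_singleton.preimage hu.continuous).isOpen_compl)
      have hF0 : F =ᶠ[nhds x] (fun _ => (0 : EuclideanSpace ℝ (Fin n))) :=
        Filter.eventually_of_mem (hop.mem_nhds ⟨hx, hux⟩)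
          (fun y hy => (smul_eq_zero.mp (huF0 y hy.1)).resolve_left hy.2)
      have hder : fderiv ℝ F x = 0 := by
        rw [hF0.fderiv_eq]; exact fderiv_const_apply 0
      have hFx : F x = 0 := hF0.eq_of_nhds
      have hdv : diverg F x = 0 := by
        unfold diverg; rw [hder]; simp
      simp [hB, hdv, hFx]
  -- integrability
  have hAint : Integrable A :=
    cA.integrable_of_hasCompactSupport
      (hsupp.mono' (Function.support_subset_iff'.mpr hA0))
  have hBint : Integrable B :=
    cB.integrable_of_hasCompactSupport
      (hsupp.mono' (Function.support_subset_iff'.mpr hB0))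
  -- the auxiliary compactly supported functions
  set g : Fin n → EuclideanSpace ℝ (Fin n) → ℝ := fun d x => u x * p x * F x d with hg
  have hgC : ∀ d, ContDiff ℝ 1 (g d) := fun d =>
    (hu.mul hp).mul ((EuclideanSpace.proj (𝕜 := ℝ) d).contDiff.comp hF)
  have hgsupp : ∀ d, HasCompactSupport (g d) := by
    intro d
    apply hsupp.mono' (Function.support_subset_iff'.mpr ?_)
    intro x hx
    have h1 : u x * F x d = 0 := by
      have := congrArg (fun v => v d) (huF0 x hx)
      simpa [PiLp.smul_apply, smul_eq_mul] using this
    calc u x * p x * F x d = p x * (u x * F x d) := by ring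
      _ = 0 := by rw [h1, mul_zero]
  -- pointwise identity
  have hsum : ∀ x, ∑ d : Fin n, fderiv ℝ (g d) x (EuclideanSpace.single d 1) = A x + B x := by
    intro x
    have hqd : DifferentiableAt ℝ (fun y => u y * p y) x := (hud x).mul (hpd x)
    have hwd : ∀ d : Fin n, DifferentiableAt ℝ (fun y => F y d) x := fun d =>
      ((EuclideanSpace.proj (𝕜 := ℝ) d).differentiableAt).comp x (hFd x)
    have hder : ∀ d : Fin n, ∀ v, fderiv ℝ (g d) x v
        = u x * p x * fderiv ℝ F x v d + F x d * fderiv ℝ (fun y => u y * p y) x v := by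
      intro d v
      have := fderiv_fun_mul (𝕜 := ℝ) (x := x) hqd (hwd d)
      rw [hg]
      simp only [this, ContinuousLinearMap.add_apply, ContinuousLinearMap.coe_smul',
        Pi.smul_apply, smul_eq_mul]
      rw [fderiv_comp_proj F hF d x v]
    have hrepr : ∑ d : Fin n, F x d • EuclideanSpace.single d (1:ℝ) = F x := by
      simpa [EuclideanSpace.basisFun_apply] using
        (EuclideanSpace.basisFun (Fin n) ℝ).sum_repr (F x)
    have hsum2 : ∑ d : Fin n, F x d * fderiv ℝ (fun y => u y * p y) x (EuclideanSpace.single d 1)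
        = fderiv ℝ (fun y => u y * p y) x (F x) := by
      conv_rhs => rw [← hrepr]
      rw [map_sum]
      simp [smul_eq_mul]
    have hq' : fderiv ℝ (fun y => u y * p y) x (F x)
        = u x * fderiv ℝ p x (F x) + p x * fderiv ℝ u x (F x) := by
      rw [fderiv_fun_mul (hud x) (hpd x)]
      simp [smul_eq_mul]
    have hgradu : fderiv ℝ u x (F x) = ⟪F x, gradient u x⟫ := by
      rw [real_inner_comm, inner_gradient_eq_fderiv]
    have hlogd : ⟪gradient (fun y => Real.log (p y)) x, F x⟫ = (p x)⁻¹ * fderiv ℝ p x (F x) := by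
      rw [inner_gradient_eq_fderiv]
      have := ((hpd x).hasFDerivAt).log (hpne x)
      rw [this.fderiv]; simp
    have hp' : fderiv ℝ p x (F x) = p x * ⟪gradient (fun y => Real.log (p y)) x, F x⟫ := by
      rw [hlogd, ← mul_assoc, mul_inv_cancel₀ (hpne x), one_mul]
    calc ∑ d : Fin n, fderiv ℝ (g d) x (EuclideanSpace.single d 1)
        = ∑ d : Fin n, (u x * p x * fderiv ℝ F x (EuclideanSpace.single d 1) d
            + F x d * fderiv ℝ (fun y => u y * p y) x (EuclideanSpace.single d 1)) := by
          exact Finset.sum_congr rfl fun d _ => hder d _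
      _ = u x * p x * diverg F x + fderiv ℝ (fun y => u y * p y) x (F x) := by
          rw [Finset.sum_add_distrib, ← Finset.mul_sum, hsum2]; rfl
      _ = A x + B x := by
          rw [hq', hp', hgradu, hA, hB]; ring
  -- integral of the divergence-like sum vanishes
  have h0 : ∫ x, (A x + B x) = 0 := by
    rw [← integral_congr_ae (Filter.Eventually.of_forall (fun x => hsum x))]
    rw [integral_finset_sum]
    · exact Finset.sum_eq_zero fun d _ =>
        integral_fderiv_apply_eq_zero (g d) (hgC d) (hgsupp d) _
    · intro d _
      exact Continuous.integrable_of_hasCompactSupport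
        (((hgC d).continuous_fderiv one_ne_zero).clm_apply continuous_const)
        ((hgsupp d).fderiv_apply ℝ _)
  rw [integral_add hAint hBint] at h0
  have hAeq : (∫ x, ⟪F x, gradient u x⟫ * p x) = ∫ x, A x := rfl
  have hBeq : (∫ x, (diverg F x + ⟪gradient (fun y => Real.log (p y)) x, F x⟫) * u x * p x)
      = ∫ x, B x := rfl
  rw [hAeq, hBeq]
  linarith
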